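/- There are infinitely many n ∈ ℕ such that h_{n+i} < 0 for all i = 0, 1, 2, 3, 4. -/
import Mathlib

def t (n : ℕ) : ℤ := (-1) ^ ((Nat.digits 2 n).sum)

def h : ℕ → ℤ
  | 0 => 0
  | 1 => 1
  | (n + 2) => t (n + 2) * h (n + 1) + h n

lemma t_even (n : ℕ) : t (2*n) = t n := by
  rcases Nat.eq_zero_or_pos n with rfl | hn
  · norm_num
  · unfold t
    rw [Nat.digits_def' (by norm_num : 1 < 2) (by omega)]
    simp [Nat.mul_div_cancel_left _ (by norm_num : 0 < 2), Nat.mul_mod_right]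

lemma t_odd (n : ℕ) : t (2*n+1) = -t n := by
  unfold t
  rw [Nat.digits_def' (by norm_num : 1 < 2) (by omega)]
  have h1 : (2*n+1) % 2 = 1 := by omega
  have h2 : (2*n+1) / 2 = n := by omega
  rw [h1, h2]
  simp [pow_succ, pow_add, mul_comm]

lemma t_sq (n : ℕ) : t n * t n = 1 := by
  unfold t
  rw [← pow_add, ← two_mul, pow_mul]
  norm_num

lemma t_pm (n : ℕ) : t n = 1 ∨ t n = -1 := by
  unfold t; exact neg_one_pow_eq_or ℤ _

lemma t0 : t 0 = 1 := by norm_num [t]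
lemma t1 : t 1 = -1 := by have := t_odd 0; rw [t0] at this; simpa using this
lemma t2 : t 2 = -1 := by have := t_even 1; rw [t1] at this; simpa using this
lemma t3 : t 3 = 1 := by have := t_odd 1; rw [t1] at this; simpa using this
lemma t4 : t 4 = -1 := by have := t_even 2; rw [t2] at this; simpa using this

lemma h_rec (n : ℕ) : h (n+2) = t (n+2) * h (n+1) + h n := rfl
lemma h0v : h 0 = 0 := rfl
lemma h1v : h 1 = 1 := rfl
lemma h2v : h 2 = -1 := by
  have e := h_rec 0; norm_num [h0v, h1v, t2] at e; exact e
lemma h3v : h 3 = 0 := by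
  have e := h_rec 1; norm_num [h1v, h2v, t3] at e; exact e
lemma h4v : h 4 = -1 := by
  have e := h_rec 2; norm_num [h2v, h3v, t4] at e; exact e

-- no three consecutive equal Thue-Morse values
lemma no_three (m : ℕ) (h1 : t m * t (m+1) = 1) : t (m+1) * t (m+2) = -1 := by
  rcases Nat.even_or_odd m with ⟨k, hk⟩ | ⟨k, hk⟩
  · exfalso
    subst hk
    rw [show k + k = 2*k by ring] at h1
    rw [t_odd, t_even] at h1
    nlinarith [t_sq k]
  · subst hk
    rw [show 2*k+1+1 = 2*(k+1) by ring, show 2*k+1+2 = 2*(k+1)+1 by ring,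
        t_odd, t_even]
    nlinarith [t_sq (k+1)]

-- h(2n+3) = -t(n+1) * h(2n)
lemma h_odd (n : ℕ) : h (2*n+3) = -t (n+1) * h (2*n) := by
  have e1 : h (2*n+3) = t (2*n+3) * h (2*n+2) + h (2*n+1) := h_rec (2*n+1)
  have e2 : h (2*n+2) = t (2*n+2) * h (2*n+1) + h (2*n) := h_rec (2*n)
  have e3 : t (2*n+3) = -t (n+1) := by
    rw [show 2*n+3 = 2*(n+1)+1 by ring, t_odd]
  have e4 : t (2*n+2) = t (n+1) := by
    rw [show 2*n+2 = 2*(n+1) by ring, t_even]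
  rw [e1, e2, e3, e4]
  linear_combination (-(h (2*n+1))) * t_sq (n+1)

-- h(2n+4) = h(2n+2) - t(n+2)*t(n+1)*h(2n)
lemma g_rec (n : ℕ) : h (2*n+4) = h (2*n+2) - t (n+2) * t (n+1) * h (2*n) := by
  have e1 : h (2*n+4) = t (2*n+4) * h (2*n+3) + h (2*n+2) := h_rec (2*n+2)
  have e2 : t (2*n+4) = t (n+2) := by
    rw [show 2*n+4 = 2*(n+2) by ring, t_even]
  rw [e1, e2, h_odd]
  ring

def P (n : ℕ) : Prop := h (2*n+2) < 0 ∧ (t (n+1) * t (n+2) = 1 → h (2*n+2) < h (2*n))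

lemma key_pair : ∀ n, P n ∧ P (n+1) := by
  intro n
  induction n with
  | zero =>
    refine ⟨⟨?_, fun _ => ?_⟩, ⟨?_, fun hc => ?_⟩⟩
    · show h 2 < 0; rw [h2v]; norm_num
    · show h 2 < h 0; rw [h2v, h0v]; norm_num
    · show h 4 < 0; rw [h4v]; norm_num
    · rw [t2, t3] at hc; norm_num at hc
  | succ n ih =>
    refine ⟨ih.2, ?_, ?_⟩
    · -- h(2(n+2)+2) < 0
      show h (2*(n+2)+2) < 0
      have hrec := g_rec (n+1)
      rw [show 2*(n+1)+4 = 2*(n+2)+2 by ring, show 2*(n+1)+2 = 2*(n+1)+2 from rfl] at hrec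
      have hg1 : h (2*n+2) < 0 := ih.1.1
      have hg2 : h (2*(n+1)+2) < 0 := ih.2.1
      rw [show 2*(n+1) = 2*n+2 by ring] at hrec
      rcases t_pm (n+3) with h3 | h3 <;> rcases t_pm (n+2) with h2' | h2'
      · have := ih.2.2 (by rw [show n+1+1 = n+2 from rfl, show n+1+2 = n+3 from rfl, h3, h2']; norm_num)
        rw [show 2*(n+1)+2 = 2*n+4 by ring, show 2*(n+1) = 2*n+2 by ring] at this
        rw [h3, h2'] at hrec
        rw [show 2*(n+1)+2 = 2*n+4 by ring] at hg2
        linarith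
      · rw [h3, h2'] at hrec
        rw [show 2*(n+1)+2 = 2*n+4 by ring] at hg2
        linarith
      · rw [h3, h2'] at hrec
        rw [show 2*(n+1)+2 = 2*n+4 by ring] at hg2
        linarith
      · have := ih.2.2 (by rw [show n+1+1 = n+2 from rfl, show n+1+2 = n+3 from rfl, h3, h2']; norm_num)
        rw [show 2*(n+1)+2 = 2*n+4 by ring, show 2*(n+1) = 2*n+2 by ring] at this
        rw [h3, h2'] at hrec
        rw [show 2*(n+1)+2 = 2*n+4 by ring] at hg2
        linarith
    · -- t(n+3)*t(n+4)=1 → h(2(n+2)+2) < h(2(n+2))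
      intro hyp
      rw [show n+2+1 = n+3 from rfl, show n+2+2 = n+4 from rfl] at hyp
      show h (2*(n+2)+2) < h (2*(n+2))
      have hrec := g_rec (n+1)
      rw [show 2*(n+1)+4 = 2*(n+2)+2 by ring, show 2*(n+1)+2 = 2*(n+2) by ring,
          show 2*(n+1) = 2*n+2 by ring] at hrec
      have hg1 : h (2*n+2) < 0 := ih.1.1
      have hprod : t (n+2) * t (n+3) = -1 := by
        rcases t_pm (n+3) with h3 | h3 <;> rcases t_pm (n+2) with h2' | h2'
        · exfalso
          have := no_three (n+2) (by rw [show n+2+1 = n+3 from rfl, h3, h2']; norm_num)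
          rw [show n+2+1 = n+3 from rfl, show n+2+2 = n+4 from rfl] at this
          rw [this] at hyp; norm_num at hyp
        · rw [h3, h2']; norm_num
        · rw [h3, h2']; norm_num
        · exfalso
          have := no_three (n+2) (by rw [show n+2+1 = n+3 from rfl, h3, h2']; norm_num)
          rw [show n+2+1 = n+3 from rfl, show n+2+2 = n+4 from rfl] at this
          rw [this] at hyp; norm_num at hyp
      rw [show t (n+3) * t (n+2) = t (n+2) * t (n+3) by ring, hprod] at hrec
      linarith

lemma g_neg (n : ℕ) : h (2*n+2) < 0 := (key_pair n).1.1

lemma t_pow2 (j : ℕ) : t (2^j) = -1 := by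
  induction j with
  | zero => exact t1
  | succ j ih => rw [pow_succ, mul_comm, t_even]; exact ih

lemma t_fam1 (k : ℕ) : t (2^(k+3)+5) = -1 := by
  rw [show 2^(k+3)+5 = 2*(2^(k+2)+2)+1 by rw [pow_succ]; ring, t_odd,
      show 2^(k+2)+2 = 2*(2^(k+1)+1) by rw [pow_succ]; ring, t_even,
      show 2^(k+1)+1 = 2*(2^k)+1 by rw [pow_succ]; ring, t_odd, t_pow2]
  norm_num

lemma t_fam2 (k : ℕ) : t (2^(k+3)+6) = -1 := by
  rw [show 2^(k+3)+6 = 2*(2^(k+2)+3) by rw [pow_succ]; ring, t_even,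
      show 2^(k+2)+3 = 2*(2^(k+1)+1)+1 by rw [pow_succ]; ring, t_odd,
      show 2^(k+1)+1 = 2*(2^k)+1 by rw [pow_succ]; ring, t_odd, t_pow2]
  norm_num

theorem stmt5 : {n : ℕ | ∀ i : ℕ, i ≤ 4 → h (n + i) < 0}.Infinite := by
  apply Set.infinite_of_injective_forall_mem
    (f := fun k : ℕ => 2^(k+4) + 10)
  case hi =>
    intro a b hab
    simp only at hab
    have := Nat.pow_right_injective (le_refl 2) (by omega : 2^(a+4) = 2^(b+4))
    omega
  case hf =>
    intro k
    intro i hi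
    -- n = 2^(k+4)+10 = 2*m where m = 2^(k+3)+5
    set m : ℕ := 2^(k+3)+5 with hm
    have hn : 2^(k+4) + 10 = 2*m := by rw [hm, pow_succ]; ring
    interval_cases i
    · -- h(2m) < 0 : m = (m-1)+1, use g_neg (m-1)
      have := g_neg (2^(k+3)+4)
      rw [show 2*(2^(k+3)+4)+2 = 2*m+0 by rw [hm]; ring] at this
      rwa [hn]
    · -- h(2m+1) = -t m * h(2(m-1)) = h(2(m-1)) since t m = -1
      have he := h_odd (2^(k+3)+4)
      rw [show 2*(2^(k+3)+4)+3 = 2*m+1 by rw [hm]; ring,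
          show (2^(k+3)+4)+1 = m by rw [hm], t_fam1] at he
      have := g_neg (2^(k+3)+3)
      rw [show 2*(2^(k+3)+3)+2 = 2*(2^(k+3)+4) by ring] at this
      rw [hn, he]
      simpa using this
    · have := g_neg (2^(k+3)+5)
      rw [show 2*(2^(k+3)+5)+2 = 2*m+2 by rw [hm]] at this
      rwa [hn]
    · -- h(2m+3) = -t(m+1) * h(2m) = h(2m)
      have he := h_odd m
      rw [show m+1 = 2^(k+3)+6 by rw [hm], t_fam2] at he
      have := g_neg (2^(k+3)+4)
      rw [show 2*(2^(k+3)+4)+2 = 2*m by rw [hm]; ring] at this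
      rw [hn, he]
      simpa using this
    · have := g_neg (2^(k+3)+6)
      rw [show 2*(2^(k+3)+6)+2 = 2*m+4 by rw [hm]; ring] at this
      rwa [hn]
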